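/- For distinct indices i ≠ j in {1,…,l}, if b_{ij} = 2 then the characteristic polynomial of M_i M_j is (X − 1)^l, the matrix M_i M_j is not the identity matrix, and M_i M_j is not diagonalizable; in particular 1 is its only eigenvalue. -/

import Mathlib

open Matrix Finset Polynomial

/-- The Gram matrix `B` with `B i i = 1` and `B i k = -(b i k)/2` for `i ≠ k`. -/
noncomputable def gramB (l : ℕ) (b : Fin l → Fin l → ℝ) : Matrix (Fin l) (Fin l) ℝ :=
  fun i k => if i = k then 1 else -(b i k) / 2

/-- The matrix `M j` of the reflection `σ j (w) = w - 2⟨w, e j⟩_B e j`: it agrees with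
the identity except in row `j`, where `(M j) j j = -1` and `(M j) j k = b j k` for `k ≠ j`. -/
noncomputable def reflM (l : ℕ) (b : Fin l → Fin l → ℝ) (j : Fin l) :
    Matrix (Fin l) (Fin l) ℝ :=
  fun r c => if r = j then (if c = j then -1 else b j c) else (if r = c then 1 else 0)

/-- **The product of two reflections when `b i j = 2`.**
The characteristic polynomial of `M i * M j` is `(X - 1) ^ l`, the matrix `M i * M j`
is not the identity and is not diagonalizable; in particular `1` is its only eigenvalue. -/
theorem reflM_mul_of_eq_two (l : ℕ) (hl : 2 ≤ l) (b : Fin l → Fin l → ℝ)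
    (hsym : ∀ i j, i ≠ j → b i j = b j i) (hge : ∀ i j, i ≠ j → 2 ≤ b i j)
    (i j : Fin l) (hij : i ≠ j) (heq : b i j = 2) :
    (reflM l b i * reflM l b j).charpoly = (X - 1) ^ l ∧
    reflM l b i * reflM l b j ≠ 1 ∧
    ¬ (∃ (P : Matrix (Fin l) (Fin l) ℝ) (d : Fin l → ℝ),
        IsUnit P.det ∧ reflM l b i * reflM l b j = P * Matrix.diagonal d * P⁻¹) ∧
    (∀ μ : ℝ, Module.End.HasEigenvalue (Matrix.toLin' (reflM l b i * reflM l b j)) μ →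
      μ = 1) := by
  classical
  have hji : j ≠ i := hij.symm
  have hbji : b j i = 2 := by rw [← hsym i j hij]; exact heq
  set Q : Matrix (Fin l) (Fin l) ℝ :=
    fun r c => if r = i then (if c = i then -2 else b i c) else 0 with hQdef
  set R : Matrix (Fin l) (Fin l) ℝ :=
    fun r c => if r = j then (if c = j then -2 else b j c) else 0 with hRdef
  set N : Matrix (Fin l) (Fin l) ℝ := fun r c =>
    if r = i then (if c = i then 2 else if c = j then -2 else b i c + 2 * b j c)
    else if r = j then (if c = i then 2 else if c = j then -2 else b j c) else 0 with hNdef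
  have hQe : reflM l b i = 1 + Q := by
    ext r c
    simp only [reflM, Matrix.add_apply, Matrix.one_apply]
    simp only [hQdef]
    split_ifs <;> simp_all <;> ring
  have hRe : reflM l b j = 1 + R := by
    ext r c
    simp only [reflM, Matrix.add_apply, Matrix.one_apply]
    simp only [hRdef]
    split_ifs <;> simp_all <;> ring
  have hQR : Q * R = fun r c => if r = i then 2 * (if c = j then -2 else b j c) else 0 := by
    ext r c
    rw [Matrix.mul_apply]
    rw [Finset.sum_eq_single j (fun k _ hk => by simp [hRdef, hk]) (by simp)]
    simp only [hQdef, hRdef, hji, if_neg hji]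
    by_cases hr : r = i <;> by_cases hc : c = j <;>
      simp [hr, hc, hji, heq] <;> ring
  have hAN : reflM l b i * reflM l b j = 1 + N := by
    rw [hQe, hRe, add_mul, mul_add, mul_add, one_mul, mul_one, hQR]
    ext r c
    simp only [Matrix.add_apply, Matrix.mul_apply, Matrix.one_apply]
    simp only [hQdef, hRdef, hNdef]
    erw [Matrix.add_apply]
    split_ifs <;> simp_all <;> ring
  -- entries of N
  have hNii : N i i = 2 := by simp [hNdef]
  have hNij : N i j = -2 := by simp [hNdef, hji]
  have hNji : N j i = 2 := by simp [hNdef, hji]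
  have hNjj : N j j = -2 := by simp [hNdef, hji]
  have hNrow : ∀ r c, r ≠ i → r ≠ j → N r c = 0 := by
    intro r c h1 h2; simp [hNdef, h1, h2]
  have hsum : ∀ f : Fin l → ℝ, (∀ k, k ≠ i → k ≠ j → f k = 0) → ∑ k, f k = f i + f j := by
    intro f hf
    have h1 : ∑ k ∈ ({i, j} : Finset (Fin l)), f k = ∑ k, f k := by
      refine Finset.sum_subset (Finset.subset_univ _) ?_
      intro x _ hx
      simp only [Finset.mem_insert, Finset.mem_singleton, not_or] at hx
      exact hf x hx.1 hx.2
    rw [← h1, Finset.sum_pair hij]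
  have hmulN : ∀ (M₁ M₂ : Matrix (Fin l) (Fin l) ℝ) r c,
      (∀ k, k ≠ i → k ≠ j → M₂ k c = 0) →
      (M₁ * M₂) r c = M₁ r i * M₂ i c + M₁ r j * M₂ j c := by
    intro M₁ M₂ r c h
    rw [Matrix.mul_apply]
    exact hsum _ (fun k h1 h2 => by rw [h k h1 h2, mul_zero])
  have hN2col : ∀ r c, (N * N) r c = N r i * N i c + N r j * N j c :=
    fun r c => hmulN N N r c (fun k h1 h2 => hNrow k c h1 h2)
  have hNri : ∀ r, N r j = - N r i := by
    intro r
    by_cases h1 : r = i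
    · subst h1; rw [hNij, hNii]
    by_cases h2 : r = j
    · subst h2; rw [hNjj, hNji]
    · rw [hNrow r j h1 h2, hNrow r i h1 h2, neg_zero]
  have hN3 : N * N * N = 0 := by
    ext r c
    have h2col : ∀ k, k ≠ i → k ≠ j → N k c = 0 := fun k h1 h2 => hNrow k c h1 h2
    rw [hmulN (N * N) N r c h2col, hN2col r i, hN2col r j, hNii, hNij, hNji, hNjj, hNri r]
    simp only [Matrix.zero_apply]
    ring
  have hNnil : IsNilpotent N := ⟨3, by rw [pow_succ, pow_two]; exact hN3⟩
  have hcharN : N.charpoly = X ^ l := by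
    have h := Matrix.isNilpotent_charpoly_sub_pow_of_isNilpotent hNnil
    have h0 := h.eq_zero
    rw [sub_eq_zero] at h0
    rwa [Fintype.card_fin] at h0
  -- the characteristic polynomial of 1 + N
  have hchar : (reflM l b i * reflM l b j).charpoly = (X - 1) ^ l := by
    rw [hAN]
    have key : charmatrix (1 + N) =
        ((aeval (X - 1 : ℝ[X])).toRingHom.mapMatrix (charmatrix N)) := by
      ext r c
      by_cases h : r = c
      · subst h
        simp only [charmatrix_apply_eq, RingHom.mapMatrix_apply, Matrix.map_apply,
          AlgHom.toRingHom_eq_coe, RingHom.coe_coe, map_sub, aeval_X, aeval_C,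
          Matrix.add_apply, Matrix.one_apply_eq]
        rw [show algebraMap ℝ ℝ[X] (N r r) = C (N r r) from rfl]
        rw [show ((1 : ℝ) + N r r) = 1 + N r r from rfl, map_add, C_1]
        ring
      · simp only [charmatrix_apply_ne _ _ _ h, RingHom.mapMatrix_apply, Matrix.map_apply,
          AlgHom.toRingHom_eq_coe, RingHom.coe_coe, map_neg, aeval_C,
          Matrix.add_apply, Matrix.one_apply_ne h]
        rw [show algebraMap ℝ ℝ[X] (N r c) = C (N r c) from rfl]
        rw [zero_add]
    unfold Matrix.charpoly
    rw [key, ← RingHom.map_det]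
    have : (charmatrix N).det = N.charpoly := rfl
    rw [this, hcharN]
    simp only [AlgHom.toRingHom_eq_coe, RingHom.coe_coe, map_pow, aeval_X]
  -- not the identity
  have hne : reflM l b i * reflM l b j ≠ 1 := by
    intro h
    have h2 : (reflM l b i * reflM l b j) i j = (1 : Matrix (Fin l) (Fin l) ℝ) i j :=
      congrFun (congrFun h i) j
    rw [hAN] at h2
    rw [Matrix.add_apply, Matrix.one_apply_ne hij, hNij] at h2
    norm_num at h2
  refine ⟨hchar, hne, ?_, ?_⟩
  · -- not diagonalizable
    rintro ⟨P, d, hP, hPD⟩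
    have hPinv : P * P⁻¹ = 1 := Matrix.mul_nonsing_inv P hP
    have hPinv' : P⁻¹ * P = 1 := Matrix.nonsing_inv_mul P hP
    have hCH := Matrix.aeval_self_charpoly (reflM l b i * reflM l b j)
    rw [hchar] at hCH
    rw [map_pow, map_sub, aeval_X, _root_.map_one] at hCH
    -- hCH : (A - 1) ^ l = 0
    have hsub : reflM l b i * reflM l b j - 1 = P * (Matrix.diagonal d - 1) * P⁻¹ := by
      rw [Matrix.mul_sub, Matrix.mul_one, Matrix.sub_mul, hPinv, ← hPD]
    have hconj : ∀ (M : Matrix (Fin l) (Fin l) ℝ) (n : ℕ),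
        (P * M * P⁻¹) ^ n = P * M ^ n * P⁻¹ := by
      intro M n
      induction n with
      | zero => simp [hPinv]
      | succ n ih =>
        rw [pow_succ, ih, pow_succ]
        calc P * M ^ n * P⁻¹ * (P * M * P⁻¹)
            = P * M ^ n * (P⁻¹ * P) * M * P⁻¹ := by
              simp only [Matrix.mul_assoc]
          _ = P * (M ^ n * M) * P⁻¹ := by rw [hPinv']; simp only [Matrix.mul_assoc, Matrix.mul_one, Matrix.one_mul]
    have hZ0 : P * ((Matrix.diagonal d - 1) ^ l) * P⁻¹ = 0 := by
      rw [← hconj, ← hsub, hCH]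
    have hZ : (Matrix.diagonal d - 1 : Matrix (Fin l) (Fin l) ℝ) ^ l = 0 := by
      have e2 : P⁻¹ * (P * ((Matrix.diagonal d - 1) ^ l) * P⁻¹) * P = 0 := by
        rw [hZ0, Matrix.mul_zero, Matrix.zero_mul]
      calc (Matrix.diagonal d - 1 : Matrix (Fin l) (Fin l) ℝ) ^ l
          = P⁻¹ * (P * ((Matrix.diagonal d - 1) ^ l) * P⁻¹) * P := by
            simp only [← Matrix.mul_assoc]
            rw [hPinv', Matrix.one_mul, Matrix.mul_assoc _ P⁻¹ P, hPinv', Matrix.mul_one]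
        _ = 0 := e2
    have hd : ∀ k, d k = 1 := by
      intro k
      have h1 : (Matrix.diagonal d - 1 : Matrix (Fin l) (Fin l) ℝ) =
          Matrix.diagonal (fun k => d k - 1) := by
        rw [← Matrix.diagonal_one, Matrix.diagonal_sub]
      rw [h1, Matrix.diagonal_pow] at hZ
      have h2 : (d k - 1) ^ l = 0 := by
        have := congrFun (congrFun hZ k) k
        simpa using this
      have h3 : d k - 1 = 0 := pow_eq_zero_iff (by omega : l ≠ 0) |>.mp h2
      linarith
    have hD1 : Matrix.diagonal d = 1 := by
      have : d = fun _ => (1 : ℝ) := funext hd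
      rw [this, Matrix.diagonal_one]
    apply hne
    rw [hPD, hD1, Matrix.mul_one, hPinv]
  · -- eigenvalues
    intro μ hμ
    have hroot := Module.End.isRoot_of_hasEigenvalue hμ
    rw [Matrix.minpoly_toLin'] at hroot
    have hdvd : minpoly ℝ (reflM l b i * reflM l b j) ∣ (reflM l b i * reflM l b j).charpoly :=
      Matrix.minpoly_dvd_charpoly _
    have hroot2 : ((X - 1 : ℝ[X]) ^ l).IsRoot μ := by
      rw [← hchar]
      exact hroot.dvd hdvd
    have h2 : (μ - 1) ^ l = 0 := by
      simpa [Polynomial.IsRoot, eval_pow, eval_sub, eval_X, eval_one] using hroot2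
    have h3 : μ - 1 = 0 := pow_eq_zero_iff (by omega : l ≠ 0) |>.mp h2
    linarith
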